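/- Let S be a commutative nil semigroup satisfying the identity x²y = xy² (for all x, y ∈ S). Then S satisfies the identity x²yz = 0, i.e., x·x·y·z = 0 for all x, y, z ∈ S. -/

import Mathlib

/-- `ppow a n` is the `n`-th power of `a` for `n ≥ 1` (with the junk value `a` at `n = 0`). -/
def ppow {S : Type*} [Mul S] (a : S) : ℕ → S
  | 0 => a
  | 1 => a
  | n + 2 => ppow a (n + 1) * a

lemma ppow_one' {S : Type*} [Mul S] (a : S) : ppow a 1 = a := rfl

lemma ppow_succ' {S : Type*} [Mul S] (a : S) (n : ℕ) (hn : 1 ≤ n) :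
    ppow a (n + 1) = ppow a n * a := by
  match n, hn with
  | (m+1), _ => rfl

lemma ppow_add' {S : Type*} [Semigroup S] (a : S) (m n : ℕ) (hm : 1 ≤ m) (hn : 1 ≤ n) :
    ppow a (m + n) = ppow a m * ppow a n := by
  induction n with
  | zero => omega
  | succ k ih =>
    rcases Nat.eq_or_lt_of_le hn with h1 | h1
    · simp [← h1, ppow_succ' a m hm, ppow_one']
    · have hk : 1 ≤ k := by omega
      rw [show m + (k + 1) = (m + k) + 1 from rfl, ppow_succ' a (m+k) (by omega),
        ih hk, ppow_succ' a k hk, mul_assoc]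

lemma ppow_eq_zero_of_le {S : Type*} [SemigroupWithZero S] (a : S) (n m : ℕ)
    (hn : 1 ≤ n) (h0 : ppow a n = 0) (hm : n ≤ m) : ppow a m = 0 := by
  rcases Nat.eq_or_lt_of_le hm with h1 | h1
  · rwa [← h1]
  · obtain ⟨k, hk⟩ : ∃ k, m = n + (k + 1) := ⟨m - n - 1, by omega⟩
    rw [hk, ppow_add' a n (k+1) hn (by omega), h0, zero_mul]

/-- A commutative nil semigroup satisfying the identity `x²y = xy²` satisfies the
identity `x²yz = 0`. -/
theorem statement8 {S : Type*} [SemigroupWithZero S]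
    (hcomm : ∀ a b : S, a * b = b * a)
    (hnil : ∀ a : S, ∃ n : ℕ, 1 ≤ n ∧ ppow a n = 0)
    (h : ∀ x y : S, (x * x) * y = x * (y * y)) :
    ∀ x y z : S, ((x * x) * y) * z = 0 := by
  intro x y z
  letI : Std.Associative (α := S) (· * ·) := ⟨mul_assoc⟩
  letI : Std.Commutative (α := S) (· * ·) := ⟨hcomm⟩
  -- key step: (x*x)*(y*z^c) = (x*x)*(y*z^(4c))
  have key : ∀ c : ℕ, 1 ≤ c →
      (x * x) * (y * ppow z c) = (x * x) * (y * ppow z (c + c + (c + c))) := by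
    intro c hc
    calc (x * x) * (y * ppow z c)
        = x * ((y * ppow z c) * (y * ppow z c)) := h x (y * ppow z c)
      _ = (y * y) * (x * (ppow z c * ppow z c)) := by ac_rfl
      _ = (y * y) * (x * ppow z (c + c)) := by rw [ppow_add' z c c hc hc]
      _ = y * ((x * ppow z (c + c)) * (x * ppow z (c + c))) := h y _
      _ = (x * x) * (y * (ppow z (c + c) * ppow z (c + c))) := by ac_rfl
      _ = (x * x) * (y * ppow z (c + c + (c + c))) := by
          rw [ppow_add' z (c+c) (c+c) (by omega) (by omega)]
  have iter : ∀ k : ℕ, (x * x) * (y * z) = (x * x) * (y * ppow z (4 ^ k)) := by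
    intro k
    induction k with
    | zero => norm_num [ppow_one']
    | succ m ih =>
      rw [ih, key (4 ^ m) (Nat.one_le_pow _ _ (by norm_num))]
      congr 2
      ring_nf
  obtain ⟨n, hn1, hn0⟩ := hnil z
  have hle : n ≤ 4 ^ n := Nat.le_of_lt (Nat.lt_pow_self (by norm_num : 1 < 4))
  have : ppow z (4 ^ n) = 0 := ppow_eq_zero_of_le z n _ hn1 hn0 hle
  rw [mul_assoc, iter n, this, mul_zero, mul_zero]
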